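/- The weighted boundary operator squares to zero: with ∂_n^v(σ) = Σ_{i=0}^n (v(σ̂_i)/v(σ)) (-1)^i σ̂_i on the free R-module generated by n-simplices of a weighted simplicial complex (X, v) where v(σ) divides v(τ) whenever τ ⊆ σ, one has ∂_{n-1}^v ∘ ∂_n^v = 0. -/

import Mathlib

/-- The weighted boundary operator: on a basis simplex `σ` (a finite set of vertices of
the linearly ordered vertex type `V`, with the simplicial ordering induced by the order),
`∂(σ) = ∑_{x ∈ σ} (-1)^{pos of x in σ} (v(σ \ x)/v(σ)) (σ \ x)`, where
`q τ σ` plays the role of the quotient `v(τ)/v(σ)`. -/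
noncomputable def wbd {V : Type*} [LinearOrder V] {R : Type*} [CommRing R]
    (q : Finset V → Finset V → R) (c : Finset V →₀ R) : Finset V →₀ R :=
  c.sum fun σ a => ∑ x ∈ σ,
    Finsupp.single (σ.erase x) ((-1 : R) ^ ((σ.filter fun y => y < x).card) * q (σ.erase x) σ * a)

section aux
variable {V : Type*} [LinearOrder V] {R : Type*} [CommRing R]

lemma wbd_single (q : Finset V → Finset V → R) (σ : Finset V) (a : R) :
    wbd q (Finsupp.single σ a) = ∑ x ∈ σ,
      Finsupp.single (σ.erase x)
        ((-1 : R) ^ ((σ.filter fun y => y < x).card) * q (σ.erase x) σ * a) := by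
  unfold wbd
  apply Finsupp.sum_single_index
  simp

lemma wbd_add (q : Finset V → Finset V → R) (f g : Finset V →₀ R) :
    wbd q (f + g) = wbd q f + wbd q g := by
  unfold wbd
  apply Finsupp.sum_add_index
  · intro σ _; simp
  · intro σ _ a b
    rw [← Finset.sum_add_distrib]
    refine Finset.sum_congr rfl fun x _ => ?_
    rw [← Finsupp.single_add, mul_add]

noncomputable def wbdHom (q : Finset V → Finset V → R) : (Finset V →₀ R) →+ (Finset V →₀ R) :=
  AddMonoidHom.mk' (wbd q) (wbd_add q)

end aux

/-- The weighted boundary operator squares to zero on chains supported on a weighted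
simplicial complex `K`: the weights `v` are non-zero-divisors, the quotients `q τ σ`
satisfy `q τ σ * v σ = v τ` for faces `τ ⊆ σ`, and `c` is a chain supported on
`n`-simplices of `K`. -/
theorem wbd_wbd_eq_zero {V : Type*} [LinearOrder V] {R : Type*} [CommRing R]
    (K : Set (Finset V)) (hK : ∀ σ ∈ K, ∀ τ ⊆ σ, τ ∈ K)
    (v : Finset V → R) (q : Finset V → Finset V → R)
    (hv : ∀ σ ∈ K, v σ ∈ nonZeroDivisors R)
    (hq : ∀ σ ∈ K, ∀ τ ⊆ σ, q τ σ * v σ = v τ)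
    (n : ℕ) (c : Finset V →₀ R) (hc : ∀ σ ∈ c.support, σ ∈ K ∧ σ.card = n + 1) :
    wbd q (wbd q c) = 0 := by
  classical
  -- single simplex case
  have key : ∀ σ ∈ K, ∀ a : R, wbd q (wbd q (Finsupp.single σ a)) = 0 := by
    intro σ hσ a
    rw [wbd_single, show wbd q = wbdHom q from rfl, map_sum]
    simp only [show (wbdHom q : (Finset V →₀ R) → _) = wbd q from rfl, wbd_single]
    rw [Finset.sum_sigma']
    -- pairwise cancellation
    set F : (Σ _ : V, V) → (Finset V →₀ R) := fun p =>
      Finsupp.single ((σ.erase p.1).erase p.2)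
        ((-1 : R) ^ (((σ.erase p.1).filter fun z => z < p.2).card) *
          q ((σ.erase p.1).erase p.2) (σ.erase p.1) *
          ((-1 : R) ^ ((σ.filter fun z => z < p.1).card) * q (σ.erase p.1) σ * a)) with hF
    have cancel : ∀ x y : V, x ∈ σ → y ∈ σ → y < x → F ⟨x, y⟩ + F ⟨y, x⟩ = 0 := by
      intro x y hx hy hyx
      have hxy : x ≠ y := ne_of_gt hyx
      have hex : σ.erase x ∈ K := hK σ hσ _ (Finset.erase_subset _ _)
      have hey : σ.erase y ∈ K := hK σ hσ _ (Finset.erase_subset _ _)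
      have hρ : (σ.erase y).erase x = (σ.erase x).erase y := Finset.erase_right_comm
      -- quotient identity
      have hQ : q ((σ.erase x).erase y) (σ.erase x) * q (σ.erase x) σ =
          q ((σ.erase x).erase y) (σ.erase y) * q (σ.erase y) σ := by
        rw [← mul_cancel_right_mem_nonZeroDivisors (hv σ hσ), mul_assoc, mul_assoc,
          hq σ hσ _ (Finset.erase_subset _ _), hq σ hσ _ (Finset.erase_subset _ _),
          hq _ hex _ (Finset.erase_subset _ _), ← hρ, hq _ hey _ (Finset.erase_subset _ _), hρ]
      -- sign computations
      have h1 : ((σ.erase x).filter fun z => z < y).card = (σ.filter fun z => z < y).card := by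
        rw [Finset.filter_erase, Finset.erase_eq_of_notMem]
        simp only [Finset.mem_filter, not_and]
        intro _
        exact not_lt.2 hyx.le
      have hymem : y ∈ σ.filter fun z => z < x := Finset.mem_filter.2 ⟨hy, hyx⟩
      have h2 : ((σ.erase y).filter fun z => z < x).card =
          (σ.filter fun z => z < x).card - 1 := by
        rw [Finset.filter_erase, Finset.card_erase_of_mem hymem]
      obtain ⟨m, hm⟩ : ∃ m, (σ.filter fun z => z < x).card = m + 1 :=
        ⟨_, (Nat.succ_pred_eq_of_pos (Finset.card_pos.2 ⟨y, hymem⟩)).symm⟩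
      simp only [hF, ← hρ, h1, h2, hm, Nat.add_sub_cancel]
      rw [hρ, ← Finsupp.single_add]
      rw [Finsupp.single_eq_zero]
      rw [pow_succ]
      linear_combination (-((-1 : R) ^ (Finset.filter (fun z => z < y) σ).card * (-1 : R) ^ m * a)) * hQ
    apply Finset.sum_involution (fun p _ => (⟨p.2, p.1⟩ : Σ _ : V, V))
    · intro p hp
      rw [Finset.mem_sigma] at hp
      obtain ⟨h1, h2⟩ := hp
      have h2' := Finset.mem_of_mem_erase h2
      have hne : p.2 ≠ p.1 := Finset.ne_of_mem_erase h2
      rcases hne.lt_or_gt with h | h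
      · exact cancel p.1 p.2 h1 h2' h
      · rw [add_comm]
        exact cancel p.2 p.1 h2' h1 h
    · intro p hp _
      rw [Finset.mem_sigma] at hp
      have hne : p.2 ≠ p.1 := Finset.ne_of_mem_erase hp.2
      intro h
      exact hne (congrArg Sigma.fst h)
    · intro p hp
      rw [Finset.mem_sigma] at hp ⊢
      exact ⟨Finset.mem_of_mem_erase hp.2,
        Finset.mem_erase.2 ⟨(Finset.ne_of_mem_erase hp.2).symm, hp.1⟩⟩
    · intro p hp
      rfl
  -- decompose c
  conv_lhs => rw [← Finsupp.sum_single c]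
  rw [Finsupp.sum, show wbd q = wbdHom q from rfl, map_sum, map_sum]
  simp only [show (wbdHom q : (Finset V →₀ R) → _) = wbd q from rfl]
  apply Finset.sum_eq_zero
  intro σ hσ
  exact key σ (hc σ hσ).1 (c σ)
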